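/- arXiv:1609.05767 — 2 statements merged into one kernel-verified Lean document; each statement's English description precedes it below -/
import Mathlib

section
/- Let [s i, f i], i ∈ Fin k, be a finite family of closed real intervals with s i ≤ f i, and suppose that at every time t ∈ ℝ the number of indices i with t ∈ [s i, f i] is at most g (a capacity constraint with g ≥ 1). Then the sum of the interval lengths is at most g times the Lebesgue measure of the union: ∑ i, (f i − s i) ≤ g · volume(⋃ i, [s i, f i]). -/
open MeasureTheory ENNReal

/-- If at every time `t` at most `g` of the intervals `[s i, f i]` contain `t`,
then the sum of the interval lengths is at most `g` times the Lebesgue measure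
of their union. -/
theorem sum_len_le_g_mul_volume_iUnion
    (k g : ℕ) (hg : 1 ≤ g) (s f : Fin k → ℝ) (hsf : ∀ i, s i ≤ f i)
    (hcap : ∀ t : ℝ,
      (Finset.univ.filter (fun i : Fin k => t ∈ Set.Icc (s i) (f i))).card ≤ g) :
    ENNReal.ofReal (∑ i : Fin k, (f i - s i))
      ≤ (g : ENNReal) * volume (⋃ i : Fin k, Set.Icc (s i) (f i)) := by
  have h1 : ENNReal.ofReal (∑ i : Fin k, (f i - s i))
      = ∑ i : Fin k, volume (Set.Icc (s i) (f i)) := by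
    rw [ENNReal.ofReal_sum_of_nonneg (fun i _ => sub_nonneg.2 (hsf i))]
    simp [Real.volume_Icc]
  rw [h1]
  calc ∑ i : Fin k, volume (Set.Icc (s i) (f i))
      = ∫⁻ t, ∑ i : Fin k, (Set.Icc (s i) (f i)).indicator (fun _ => (1 : ℝ≥0∞)) t := by
        rw [lintegral_finset_sum _ (fun i _ =>
          (measurable_const.indicator measurableSet_Icc))]
        simp [lintegral_indicator_one measurableSet_Icc]
    _ ≤ ∫⁻ t, (⋃ i : Fin k, Set.Icc (s i) (f i)).indicator (fun _ => (g : ℝ≥0∞)) t := by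
        refine lintegral_mono fun t => ?_
        by_cases ht : t ∈ ⋃ i : Fin k, Set.Icc (s i) (f i)
        · rw [Set.indicator_of_mem ht]
          have : ∑ i : Fin k, (Set.Icc (s i) (f i)).indicator (fun _ => (1 : ℝ≥0∞)) t
              = ((Finset.univ.filter (fun i : Fin k => t ∈ Set.Icc (s i) (f i))).card : ℝ≥0∞) := by
            rw [Finset.card_filter]
            push_cast
            refine Finset.sum_congr rfl fun i _ => ?_
            by_cases h : t ∈ Set.Icc (s i) (f i) <;> simp [h, Set.indicator]
          rw [this]
          exact (Nat.cast_le (α := ℝ≥0∞)).2 (hcap t)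
        · rw [Set.indicator_of_notMem ht]
          have : ∀ i : Fin k, (Set.Icc (s i) (f i)).indicator (fun _ => (1 : ℝ≥0∞)) t = 0 := by
            intro i
            refine Set.indicator_of_notMem (fun h => ht (Set.mem_iUnion.2 ⟨i, h⟩)) _
          simp [this]
    _ = (g : ℝ≥0∞) * volume (⋃ i : Fin k, Set.Icc (s i) (f i)) := by
        rw [lintegral_indicator_const (MeasurableSet.iUnion fun i => measurableSet_Icc)]
end

section
/- (Capacity bound.) For any finite family of jobs [s i, f i], i ∈ Fin n, with s i ≤ f i, and any schedule σ : Fin n → Fin m satisfying the capacity constraint g ≥ 1 (for every time t ∈ ℝ and every machine j, at most g jobs i with σ i = j satisfy t ∈ [s i, f i]), the cost of σ is at least len(J)/g; equivalently, len(J) = ∑ i, (f i − s i) ≤ g · (∑ j, volume(⋃ {[s i, f i] : σ i = j})). In particular OPT(J, g) ≥ len(J)/g. -/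
open MeasureTheory

lemma machine_bound (n m g : ℕ) (s f : Fin n → ℝ)
    (σ : Fin n → Fin m) (j : Fin m)
    (hcap : ∀ t : ℝ,
      (Finset.univ.filter
        (fun i : Fin n => σ i = j ∧ t ∈ Set.Icc (s i) (f i))).card ≤ g) :
    ∑ i ∈ Finset.univ.filter (fun i : Fin n => σ i = j),
        volume (Set.Icc (s i) (f i))
      ≤ (g : ENNReal) *
          volume (⋃ i ∈ {i : Fin n | σ i = j}, Set.Icc (s i) (f i)) := by
  set U := ⋃ i ∈ {i : Fin n | σ i = j}, Set.Icc (s i) (f i) with hU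
  have hUm : MeasurableSet U :=
    MeasurableSet.biUnion (Set.to_countable _) (fun i _ => measurableSet_Icc)
  have h1 : ∀ i : Fin n,
      volume (Set.Icc (s i) (f i))
        = ∫⁻ t, (Set.Icc (s i) (f i)).indicator (fun _ => (1 : ENNReal)) t := by
    intro i
    rw [lintegral_indicator_const measurableSet_Icc, one_mul]
  calc ∑ i ∈ Finset.univ.filter (fun i : Fin n => σ i = j),
          volume (Set.Icc (s i) (f i))
      = ∫⁻ t, ∑ i ∈ Finset.univ.filter (fun i : Fin n => σ i = j),
          (Set.Icc (s i) (f i)).indicator (fun _ => (1 : ENNReal)) t := by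
        rw [lintegral_finset_sum]
        · exact Finset.sum_congr rfl (fun i _ => h1 i)
        · intro i _
          exact (measurable_const).indicator measurableSet_Icc
    _ ≤ ∫⁻ t, (g : ENNReal) * U.indicator (fun _ => (1 : ENNReal)) t := by
        refine lintegral_mono fun t => ?_
        dsimp only
        have hsum : ∑ i ∈ Finset.univ.filter (fun i : Fin n => σ i = j),
            (Set.Icc (s i) (f i)).indicator (fun _ => (1 : ENNReal)) t
            = ((Finset.univ.filter
                (fun i : Fin n => σ i = j ∧ t ∈ Set.Icc (s i) (f i))).card : ENNReal) := by
          simp only [Set.indicator_apply]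
          rw [Finset.sum_boole, Finset.filter_filter]
        rw [hsum]
        by_cases ht : t ∈ U
        · rw [Set.indicator_of_mem ht, mul_one]
          exact_mod_cast Nat.cast_le.mpr (hcap t)
        · have : (Finset.univ.filter
              (fun i : Fin n => σ i = j ∧ t ∈ Set.Icc (s i) (f i))) = ∅ := by
            rw [Finset.filter_eq_empty_iff]
            rintro i - ⟨hij, hti⟩
            exact ht (Set.mem_biUnion hij hti)
          rw [this]
          simp
    _ = (g : ENNReal) * volume U := by
        rw [lintegral_const_mul _ ((measurable_const).indicator hUm),
          lintegral_indicator_const hUm, one_mul]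

/-- Capacity bound: if schedule `σ` puts at most `g` overlapping jobs on each
machine at any time, then `len(J) ≤ g · cost(σ)`. -/
theorem len_le_g_mul_cost
    (n m g : ℕ) (hg : 1 ≤ g) (s f : Fin n → ℝ) (hsf : ∀ i, s i ≤ f i)
    (σ : Fin n → Fin m)
    (hcap : ∀ t : ℝ, ∀ j : Fin m,
      (Finset.univ.filter
        (fun i : Fin n => σ i = j ∧ t ∈ Set.Icc (s i) (f i))).card ≤ g) :
    ENNReal.ofReal (∑ i : Fin n, (f i - s i))
      ≤ (g : ENNReal) *
          ∑ j : Fin m, volume (⋃ i ∈ {i : Fin n | σ i = j}, Set.Icc (s i) (f i)) := by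
  have h1 : ENNReal.ofReal (∑ i : Fin n, (f i - s i))
      = ∑ i : Fin n, volume (Set.Icc (s i) (f i)) := by
    rw [ENNReal.ofReal_sum_of_nonneg (fun i _ => sub_nonneg.mpr (hsf i))]
    exact Finset.sum_congr rfl (fun i _ => (Real.volume_Icc).symm)
  rw [h1, Finset.mul_sum]
  rw [← Finset.sum_fiberwise Finset.univ σ (fun i => volume (Set.Icc (s i) (f i)))]
  exact Finset.sum_le_sum (fun j _ => machine_bound n m g s f σ j (fun t => hcap t j))
end
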